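/- Let L be an LTS, ψ a conjunction-free formula in canonical form, U a realisable ψ-avoiding sequence in L with realisation witness (v_0, …, v_{l+1}), and k ≥ 1. Then every k-pumping ρ_k of (U, v_0, …, v_{l+1}) satisfies (ρ_k, k) ⊭ F_p^∞ ψ. -/

import Mathlib

open scoped Classical
open MeasureTheory

/-- A labelled transition system: a finite set of states `S`, an initial state,
a transition relation in which every state has at least one successor, and a
labeling of states by sets of atomic propositions. -/
structure LTS (S AP : Type) where
  init : S
  T : S → S → Prop
  lbl : S → Set AP
  succ_nonempty : ∀ s : S, ∃ t : S, T s t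

variable {S AP : Type}

/-- A run of an LTS: an infinite sequence of states following the transitions. -/
def IsRun (L : LTS S AP) (ρ : ℕ → S) : Prop := ∀ i : ℕ, L.T (ρ i) (ρ (i + 1))

/-- The shifted run `ρ[i..]`. -/
def shift (ρ : ℕ → S) (i : ℕ) : ℕ → S := fun n => ρ (n + i)

/-- A state formula: a (possibly empty, i.e. `false`) disjunction of literals,
each literal being a polarity (`true` = positive) paired with an atomic proposition. -/
abbrev StateFormula (AP : Type) := List (Bool × AP)

/-- A state `s` satisfies a state formula `θ`. -/
def SatState (L : LTS S AP) (θ : StateFormula AP) (s : S) : Prop :=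
  ∃ p ∈ θ, if p.1 then p.2 ∈ L.lbl s else p.2 ∉ L.lbl s

/-- A conjunction-free formula in canonical form `ψ = θ ∨ ⋁ F_p^∞ ψᵢ`, identified
with its tree `T(ψ)`: a root labeled by the state formula `θ` whose children are
the trees of the `ψᵢ`. -/
inductive CTree (AP : Type) : Type where
  | node : StateFormula AP → List (CTree AP) → CTree AP

/-- Satisfaction `(ρ, k) ⊨ ψ` for a canonical conjunction-free formula
`ψ = θ ∨ ⋁ F_p^∞ ψᵢ`. -/
def SatC (L : LTS S AP) : CTree AP → (ℕ → S) → ℕ → Prop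
  | .node θ cs, ρ, k =>
      SatState L θ (ρ 0) ∨
      ∃ c ∈ cs.attach, ∀ i : ℕ, ∃ j ≤ k, SatC L c.1 (shift ρ (i + j)) k
termination_by t => sizeOf t
decreasing_by
  have := List.sizeOf_lt_of_mem c.2
  simp only [CTree.node.sizeOf_spec]
  omega

/-- Satisfaction `(ρ, k) ⊨ F_p^∞ ψ` for a canonical conjunction-free formula `ψ`. -/
def SatFinfC (L : LTS S AP) (t : CTree AP) (ρ : ℕ → S) (k : ℕ) : Prop :=
  ∀ i : ℕ, ∃ j ≤ k, SatC L t (shift ρ (i + j)) k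

/-- `Interleave l₁ l₂ l`: `l` is an interleaving (shuffle) of `l₁` and `l₂`. -/
inductive Interleave {α : Type} : List α → List α → List α → Prop where
  | nil : Interleave [] [] []
  | left {a : α} {l₁ l₂ l : List α} : Interleave l₁ l₂ l → Interleave (a :: l₁) l₂ (a :: l)
  | right {a : α} {l₁ l₂ l : List α} : Interleave l₁ l₂ l → Interleave l₁ (a :: l₂) (a :: l)

mutual
/-- `LinExt t l`: the list `l` of state-formula labels enumerates the nodes of the
tree `t` in a linear order extending the ancestor order of the tree (the root comes
first, followed by an interleaving of linear extensions of the children's subtrees). -/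
inductive LinExt {AP : Type} : CTree AP → List (StateFormula AP) → Prop where
  | node {θ : StateFormula AP} {cs : List (CTree AP)} {l : List (StateFormula AP)} :
      LinExtF cs l → LinExt (.node θ cs) (θ :: l)

/-- Linear extensions of a forest: interleavings of linear extensions of its trees. -/
inductive LinExtF {AP : Type} : List (CTree AP) → List (StateFormula AP) → Prop where
  | nil : LinExtF [] []
  | cons {t : CTree AP} {ts : List (CTree AP)} {l₁ l₂ l : List (StateFormula AP)} :
      LinExt t l₁ → LinExtF ts l₂ → Interleave l₁ l₂ l → LinExtF (t :: ts) l
end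

/-- A (nonempty) finite path of the LTS. -/
def IsPath (L : LTS S AP) (u : List S) : Prop := u ≠ [] ∧ u.Chain' L.T

/-- A loop: a finite path with at least one transition whose first and last states coincide. -/
def IsLoop (L : LTS S AP) (u : List S) : Prop :=
  2 ≤ u.length ∧ u.Chain' L.T ∧ u.head? = u.getLast?

/-- The set `occ u` of states occurring in a finite sequence. -/
def occ (u : List S) : Set S := {s | s ∈ u}

/-- A `ψ`-avoiding sequence: a linear ordering of the nodes of `T(ψ)` extending the
ancestor order together with, for each node labeled by a state formula `θ`, a loop
whose set of states is a `θ`-avoiding cycle. -/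
structure AvoidingSeq (L : LTS S AP) (ψ : CTree AP) where
  labels : List (StateFormula AP)
  loops : List (List S)
  linext : LinExt ψ labels
  length_eq : loops.length = labels.length
  isLoop : ∀ u ∈ loops, IsLoop L u
  avoid : ∀ p ∈ loops.zip labels, ∀ s ∈ p.1, ¬ SatState L p.2 s

/-- `(vs, tail)` is a realisation witness for the loops `u₀, …, u_l` of an avoiding
sequence: finite paths `v₀, …, v_l` and an infinite run `v_{l+1} = tail`, where `v₀`
starts at the initial state, `vᵢ` starts in `occ u_{i-1}` for `1 ≤ i ≤ l+1`, and
`vᵢ` ends in `occ uᵢ` for `0 ≤ i ≤ l`. -/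
def IsRealWitness (L : LTS S AP) (loops vs : List (List S)) (tail : ℕ → S) : Prop :=
  vs.length = loops.length ∧
  (∀ v ∈ vs, IsPath L v) ∧
  IsRun L tail ∧
  (∀ h : 0 < vs.length, (vs.get ⟨0, h⟩).head? = some L.init) ∧
  (∀ (i : ℕ) (h : i + 1 < vs.length) (h' : i < loops.length) (s : S),
      (vs.get ⟨i + 1, h⟩).head? = some s → s ∈ occ (loops.get ⟨i, h'⟩)) ∧
  (∀ (i : ℕ) (h : i < vs.length) (h' : i < loops.length) (s : S),
      (vs.get ⟨i, h⟩).getLast? = some s → s ∈ occ (loops.get ⟨i, h'⟩)) ∧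
  (∀ h : 0 < loops.length,
      tail 0 ∈ occ (loops.get ⟨loops.length - 1, Nat.sub_lt h Nat.one_pos⟩))

/-- An avoiding sequence is realisable in `L` if it admits a realisation witness. -/
def Realisable {ψ : CTree AP} (L : LTS S AP) (U : AvoidingSeq L ψ) : Prop :=
  ∃ (vs : List (List S)) (tail : ℕ → S), IsRealWitness L U.loops vs tail

/-- Prepend a finite word to an infinite sequence. -/
def appendSeq (w : List S) (ρ : ℕ → S) : ℕ → S :=
  fun n => if h : n < w.length then w.get ⟨n, h⟩ else ρ (n - w.length)

/-- The finite word `v₀ (u₀)^k v₁ (u₁)^k ⋯ v_l (u_l)^k`. -/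
def pumpPrefix (k : ℕ) : List (List S) → List (List S) → List S
  | v :: vs, u :: us => v ++ (List.replicate k u).flatten ++ pumpPrefix k vs us
  | _, _ => []

/-- The `k`-pumping `v₀ (u₀)^k v₁ (u₁)^k ⋯ v_l (u_l)^k v_{l+1}` of a realisation
witness, where each loop `uᵢ` is traversed `k` consecutive times. -/
def pumpRun (k : ℕ) (vs loops : List (List S)) (tail : ℕ → S) : ℕ → S :=
  appendSeq (pumpPrefix k vs loops) tail

/- ## Auxiliary lemmas -/

lemma shift_shift (ρ : ℕ → S) (a b : ℕ) : shift (shift ρ a) b = shift ρ (a + b) := by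
  funext n; simp only [shift]; congr 1; omega

lemma satFinfC_mono (L : LTS S AP) (t : CTree AP) (k : ℕ) (ρ : ℕ → S) {a b : ℕ}
    (hab : a ≤ b) (hs : SatFinfC L t (shift ρ a) k) : SatFinfC L t (shift ρ b) k := by
  intro i
  obtain ⟨j, hj, hsat⟩ := hs ((b - a) + i)
  refine ⟨j, hj, ?_⟩
  rw [shift_shift] at hsat ⊢
  have : b + (i + j) = a + (b - a + i + j) := by omega
  rw [this]; exact hsat

lemma interleave_sublist_left {α : Type} {l₁ l₂ l : List α} (h : Interleave l₁ l₂ l) :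
    l₁.Sublist l := by
  induction h with
  | nil => exact List.Sublist.refl _
  | left _ ih => exact ih.cons₂ _
  | right _ ih => exact ih.cons _

lemma interleave_sublist_right {α : Type} {l₁ l₂ l : List α} (h : Interleave l₁ l₂ l) :
    l₂.Sublist l := by
  induction h with
  | nil => exact List.Sublist.refl _
  | left _ ih => exact ih.cons _
  | right _ ih => exact ih.cons₂ _

lemma interleave_map_split {α β : Type} {l₁ l₂ l : List α} (h : Interleave l₁ l₂ l) :
    ∀ (Lst : List β) (f : β → α), Lst.map f = l →
      ∃ A B, Interleave A B Lst ∧ A.map f = l₁ ∧ B.map f = l₂ := by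
  induction h with
  | nil =>
      intro Lst f hmap
      have : Lst = [] := by simpa using hmap
      subst this
      exact ⟨[], [], .nil, rfl, rfl⟩
  | @left a l₁ l₂ l _ ih =>
      intro Lst f hmap
      cases Lst with
      | nil => simp at hmap
      | cons p Ls =>
          simp only [List.map_cons, List.cons.injEq] at hmap
          obtain ⟨A, B, hi, hA, hB⟩ := ih Ls f hmap.2
          exact ⟨p :: A, B, .left hi, by simp [hA, hmap.1], hB⟩
  | @right a l₁ l₂ l _ ih =>
      intro Lst f hmap
      cases Lst with
      | nil => simp at hmap
      | cons p Ls =>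
          simp only [List.map_cons, List.cons.injEq] at hmap
          obtain ⟨A, B, hi, hA, hB⟩ := ih Ls f hmap.2
          exact ⟨A, p :: B, .right hi, hA, by simp [hB, hmap.1]⟩

lemma linextF_split :
    ∀ (ts : List (CTree AP)) (Lst : List (StateFormula AP × ℕ)),
      LinExtF ts (Lst.map Prod.fst) → ∀ t ∈ ts,
      ∃ A : List (StateFormula AP × ℕ), A.Sublist Lst ∧ LinExt t (A.map Prod.fst) := by
  intro ts
  induction ts with
  | nil => intro _ _ t ht; cases ht
  | cons t ts ih =>
      intro Lst h t' ht'
      cases h with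
      | cons h1 h2 hI =>
        obtain ⟨A, B, hAB, hA, hB⟩ := interleave_map_split hI Lst Prod.fst rfl
        rcases List.mem_cons.mp ht' with rfl | ht'
        · exact ⟨A, interleave_sublist_left hAB, hA ▸ h1⟩
        · obtain ⟨A', hsub, hle⟩ := ih B (hB ▸ h2) t' ht'
          exact ⟨A', hsub.trans (interleave_sublist_right hAB), hle⟩

theorem tree_lemma_aux (L : LTS S AP) (k : ℕ) (ρ : ℕ → S) :
    ∀ (n : ℕ) (t : CTree AP), sizeOf t ≤ n →
    ∀ (Lst : List (StateFormula AP × ℕ)),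
    LinExt t (Lst.map Prod.fst) →
    Lst.Pairwise (fun p q => p.2 + k ≤ q.2) →
    (∀ p ∈ Lst, ∀ j ≤ k, ¬ SatState L p.1 (ρ (p.2 + j))) →
    ∀ m : ℕ, (∀ p ∈ Lst, m ≤ p.2) →
    ¬ SatFinfC L t (shift ρ m) k := by
  intro n
  induction n with
  | zero =>
      intro t hsz
      exfalso
      cases t with
      | node θ cs =>
        simp only [CTree.node.sizeOf_spec] at hsz
        omega
  | succ n ihn =>
    intro t hsz Lst hle hpw hwin m hm
    cases Lst with
    | nil => cases t; cases hle
    | cons p Lst' =>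
      cases t with
      | node θ cs =>
        have hle' : LinExtF cs (Lst'.map Prod.fst) := by
          cases hle; assumption
        have hθ : p.1 = θ := by
          cases hle; rfl
        intro hs
        have hmp : m ≤ p.2 := hm p List.mem_cons_self
        obtain ⟨j, hj, hsat⟩ := hs (p.2 - m)
        rw [shift_shift] at hsat
        have he : m + (p.2 - m + j) = p.2 + j := by omega
        rw [he] at hsat
        rw [SatC] at hsat
        rcases hsat with hstate | ⟨c, hc, hrest⟩
        · have h0 : shift ρ (p.2 + j) 0 = ρ (p.2 + j) := by simp [shift]
          rw [h0, ← hθ] at hstate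
          exact hwin p List.mem_cons_self j hj hstate
        · have hF : SatFinfC L c.1 (shift ρ (p.2 + j)) k := hrest
          have hpw' := List.pairwise_cons.mp hpw
          obtain ⟨A, hsub, hleA⟩ := linextF_split cs Lst' hle' c.1 c.2
          have hszc : sizeOf c.1 ≤ n := by
            have h1 := List.sizeOf_lt_of_mem c.2
            simp only [CTree.node.sizeOf_spec] at hsz
            omega
          have hnot : ¬ SatFinfC L c.1 (shift ρ (p.2 + k)) k :=
            ihn c.1 hszc A hleA (hpw'.2.sublist hsub)
              (fun q hq => hwin q (List.mem_cons_of_mem _ (hsub.mem hq)))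
              (p.2 + k) (fun q hq => hpw'.1 q (hsub.mem hq))
          exact hnot (satFinfC_mono L c.1 k ρ (by omega) hF)

theorem tree_lemma (L : LTS S AP) (k : ℕ) (ρ : ℕ → S)
    (t : CTree AP) (Lst : List (StateFormula AP × ℕ))
    (hle : LinExt t (Lst.map Prod.fst))
    (hpw : Lst.Pairwise (fun p q => p.2 + k ≤ q.2))
    (hwin : ∀ p ∈ Lst, ∀ j ≤ k, ¬ SatState L p.1 (ρ (p.2 + j)))
    (m : ℕ) (hm : ∀ p ∈ Lst, m ≤ p.2) :
    ¬ SatFinfC L t (shift ρ m) k :=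
  tree_lemma_aux L k ρ (sizeOf t) t le_rfl Lst hle hpw hwin m hm

lemma appendSeq_append (a b : List S) (ρ : ℕ → S) (n : ℕ) :
    appendSeq (a ++ b) ρ (a.length + n) = appendSeq b ρ n := by
  unfold appendSeq
  by_cases h : n < b.length
  · rw [dif_pos (by simp; omega), dif_pos h]
    simp only [List.get_eq_getElem]
    rw [List.getElem_append_right (by omega)]
    congr 1; omega
  · rw [dif_neg (by simp; omega), dif_neg h]
    congr 1; simp; omega

lemma appendSeq_lt (a : List S) (ρ : ℕ → S) {n : ℕ} (h : n < a.length) :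
    appendSeq a ρ n = a[n] := by
  unfold appendSeq; rw [dif_pos h]; simp

lemma length_flatten_replicate (k : ℕ) (u : List S) :
    ((List.replicate k u).flatten).length = k * u.length := by
  induction k with
  | zero => simp
  | succ k ih => simp [List.replicate_succ, ih, Nat.succ_mul]; omega

lemma mem_flatten_replicate {k : ℕ} {u : List S} {s : S}
    (h : s ∈ (List.replicate k u).flatten) : s ∈ u := by
  obtain ⟨l, hl, hs⟩ := List.mem_flatten.mp h
  rwa [(List.eq_of_mem_replicate hl)] at hs

lemma windows_exist (L : LTS S AP) (k : ℕ) (hk : 1 ≤ k) :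
    ∀ (vs us : List (List S)) (ls : List (StateFormula AP)) (tail : ℕ → S),
    vs.length = us.length → us.length = ls.length →
    (∀ u ∈ us, 2 ≤ u.length) →
    (∀ p ∈ us.zip ls, ∀ s ∈ p.1, ¬ SatState L p.2 s) →
    ∃ Lst : List (StateFormula AP × ℕ),
      Lst.map Prod.fst = ls ∧
      Lst.Pairwise (fun p q => p.2 + k ≤ q.2) ∧
      ∀ p ∈ Lst, ∀ j ≤ k, ¬ SatState L p.1 (appendSeq (pumpPrefix k vs us) tail (p.2 + j)) := by
  intro vs
  induction vs with
  | nil =>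
      intro us ls tail h1 h2 _ _
      have hus : us = [] := by
        cases us with
        | nil => rfl
        | cons a b => simp at h1
      subst hus
      have hls : ls = [] := by
        cases ls with
        | nil => rfl
        | cons a b => simp at h2
      subst hls
      exact ⟨[], rfl, List.Pairwise.nil, by simp⟩
  | cons v vs ih =>
      intro us ls tail h1 h2 hlen havoid
      cases us with
      | nil => simp at h1
      | cons u us =>
        cases ls with
        | nil => simp at h2
        | cons θ ls =>
          obtain ⟨Lst', hmap, hpw, hwin⟩ := ih us ls tail (by simpa using h1)
            (by simpa using h2) (fun w hw => hlen w (List.mem_cons_of_mem _ hw))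
            (fun p hp => havoid p (by simp [List.zip_cons_cons]; right; exact hp))
          set F := (List.replicate k u).flatten with hF
          have hFlen : F.length = k * u.length := length_flatten_replicate k u
          have hu2 : 2 ≤ u.length := hlen u List.mem_cons_self
          have hFk : k + 1 ≤ F.length := by
            rw [hFlen]; nlinarith
          set D := v.length + k * u.length with hD
          refine ⟨(θ, v.length) :: Lst'.map (fun p => (p.1, p.2 + D)), ?_, ?_, ?_⟩
          · simp [← hmap]
          · rw [List.pairwise_cons]
            constructor
            · intro q hq
              simp only [List.mem_map] at hq
              obtain ⟨p, _, rfl⟩ := hq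
              simp only [hD]
              nlinarith
            · rw [List.pairwise_map]
              refine hpw.imp ?_
              intro p q h; simpa using by omega
          · intro p hp j hj
            have hpump : pumpPrefix k (v :: vs) (u :: us) = v ++ F ++ pumpPrefix k vs us := rfl
            rcases List.mem_cons.mp hp with rfl | hp'
            · -- head window
              simp only [hpump]
              rw [List.append_assoc]
              rw [appendSeq_append v (F ++ pumpPrefix k vs us) tail j]
              have hjF : j < (F ++ pumpPrefix k vs us).length := by simp; omega
              rw [appendSeq_lt _ _ hjF]
              have hjF' : j < F.length := by omega
              rw [List.getElem_append_left hjF']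
              have hmem : F[j] ∈ u := mem_flatten_replicate (List.getElem_mem _)
              exact havoid (u, θ) (by simp [List.zip_cons_cons]) _ hmem
            · simp only [List.mem_map] at hp'
              obtain ⟨q, hq, rfl⟩ := hp'
              simp only [hpump]
              have hlenVF : (v ++ F).length = D := by simp [hD, hFlen]
              have harith : q.2 + D + j = (v ++ F).length + (q.2 + j) := by
                rw [hlenVF]; omega
              rw [harith, appendSeq_append (v ++ F) (pumpPrefix k vs us) tail (q.2 + j)]
              exact hwin q hq j hj

lemma shift_zero (ρ : ℕ → S) : shift ρ 0 = ρ := by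
  funext n; simp [shift]

/-- If `U` is a realisable `ψ`-avoiding sequence in `L` with
realisation witness `(vs, tail)` and `k ≥ 1`, then the `k`-pumping `ρ_k` of the
witness satisfies `(ρ_k, k) ⊭ F_p^∞ ψ`. -/
theorem pumping_is_counterexample [Fintype S] (L : LTS S AP) (ψ : CTree AP)
    (U : AvoidingSeq L ψ) (vs : List (List S)) (tail : ℕ → S)
    (hw : IsRealWitness L U.loops vs tail) (k : ℕ) (hk : 1 ≤ k) :
    ¬ SatFinfC L ψ (pumpRun k vs U.loops tail) k := by
  obtain ⟨Lst, hmap, hpw, hwin⟩ := windows_exist L k hk vs U.loops U.labels tail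
    hw.1 U.length_eq (fun u hu => (U.isLoop u hu).1) U.avoid
  have := tree_lemma L k (pumpRun k vs U.loops tail) ψ Lst
    (hmap ▸ U.linext) hpw hwin 0 (fun q _ => Nat.zero_le _)
  rwa [shift_zero] at this
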